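/- Suppose Ω ⊂ Ω̃ ⊂ ℝ² are domains and there exists a bounded linear extension operator E_Ω : L^{1,2}_A(Ω) → L^{1,2}_A(Ω̃) with (E_Ω u)|_Ω = u and norm ‖E_Ω‖. Then the first non-trivial Neumann eigenvalues satisfy μ₁(A, Ω) ≥ μ₁(A, Ω̃)/‖E_Ω‖². -/

import Mathlib

open MeasureTheory

noncomputable section

abbrev Plane := EuclideanSpace ℝ (Fin 2)

/-- The weighted Dirichlet seminorm `‖u | L^{1,2}_A(Ω)‖ = (∬_Ω ⟨A∇u,∇u⟩)^{1/2}`. -/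
def dirichletSeminorm (A : Plane → (Plane →ₗ[ℝ] Plane)) (Ω : Set Plane)
    (u : Plane → ℝ) : ℝ :=
  Real.sqrt (∫ z in Ω, (inner ℝ (A z (gradient u z)) (gradient u z) : ℝ))

/-- The `L²(Ω)` norm. -/
def l2NormOn (Ω : Set Plane) (u : Plane → ℝ) : ℝ :=
  Real.sqrt (∫ z in Ω, (u z) ^ 2)

/-- The Sobolev class `W^{1,2}(Ω)`: differentiable on `Ω`, with `u` and `∇u` in `L²(Ω)`. -/
def sobolevClass (Ω : Set Plane) : Set (Plane → ℝ) :=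
  {u | DifferentiableOn ℝ u Ω ∧ IntegrableOn (fun z => (u z) ^ 2) Ω ∧
       IntegrableOn (fun z => ‖gradient u z‖ ^ 2) Ω}

/-- Admissible constants for the Poincaré inequality
`inf_c ‖u - c‖_{L²(Ω)} ≤ B ‖u | L^{1,2}_A(Ω)‖`. -/
def poincareConstSet (A : Plane → (Plane →ₗ[ℝ] Plane)) (Ω : Set Plane) : Set ℝ :=
  {B | 0 ≤ B ∧ ∀ u ∈ sobolevClass Ω,
    (⨅ c : ℝ, l2NormOn Ω (fun z => u z - c)) ≤ B * dirichletSeminorm A Ω u}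

/-- The best Poincaré constant `B_{2,2}(A,Ω)`. -/
def bestPoincare (A : Plane → (Plane →ₗ[ℝ] Plane)) (Ω : Set Plane) : ℝ :=
  sInf (poincareConstSet A Ω)

/-- The set of Rayleigh quotients over nonzero mean-zero Sobolev functions. -/
def rayleighSet (A : Plane → (Plane →ₗ[ℝ] Plane)) (Ω : Set Plane) : Set ℝ :=
  {r | ∃ u ∈ sobolevClass Ω, (∫ z in Ω, u z) = 0 ∧ l2NormOn Ω u ≠ 0 ∧
       r = (dirichletSeminorm A Ω u) ^ 2 / (l2NormOn Ω u) ^ 2}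

/-- The first non-trivial Neumann eigenvalue `μ₁(A,Ω)`, via the Min-Max principle. -/
def neumannEig (A : Plane → (Plane →ₗ[ℝ] Plane)) (Ω : Set Plane) : ℝ :=
  sInf (rayleighSet A Ω)

/-- The identity matrix field (corresponding to the Laplacian). -/
def idField : Plane → (Plane →ₗ[ℝ] Plane) := fun _ => LinearMap.id

/- ---------------- Auxiliary lemmas ---------------- -/

lemma grad_sub_const (f : Plane → ℝ) (c : ℝ) (z : Plane) :
    gradient (fun y => f y - c) z = gradient f z := by
  simp [gradient, fderiv_sub_const]

lemma hyperplane_null (c : ℝ) : volume {z : Plane | z 0 = c} = 0 := by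
  set f : Plane →ᵃ[ℝ] ℝ := (EuclideanSpace.proj (𝕜 := ℝ) (0 : Fin 2)).toContinuousAffineMap.toAffineMap with hf
  set s : AffineSubspace ℝ Plane := AffineSubspace.comap f (AffineSubspace.mk' c (⊥ : Submodule ℝ ℝ)) with hs
  have hcoe : (s : Set Plane) = {z : Plane | z 0 = c} := by
    rw [hs, AffineSubspace.coe_comap]
    ext z
    simp [hf, AffineSubspace.mem_mk', EuclideanSpace.proj, sub_eq_zero]
  have hne : s ≠ ⊤ := by
    intro h
    have h1 : (EuclideanSpace.single 0 (c + 1) : Plane) ∈ (s : Set Plane) := by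
      rw [h]; trivial
    rw [hcoe] at h1
    simp [EuclideanSpace.single_apply] at h1
  rw [← hcoe]
  exact Measure.addHaar_affineSubspace volume s hne

/-- L² on a finite-measure set implies L¹. -/
lemma integrableOn_of_sq {Ω : Set Plane} (hfin : volume Ω ≠ ⊤) {u : Plane → ℝ}
    (hm : AEStronglyMeasurable u (volume.restrict Ω))
    (h2 : IntegrableOn (fun z => (u z) ^ 2) Ω) : IntegrableOn u Ω := by
  haveI : IsFiniteMeasure (volume.restrict Ω) :=
    ⟨by rw [Measure.restrict_apply_univ]; exact lt_top_iff_ne_top.2 hfin⟩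
  exact ((memLp_two_iff_integrable_sq hm).2 h2).integrable (by norm_num)

lemma sq_sub_const_integrableOn {Ω : Set Plane} (hfin : volume Ω ≠ ⊤) {u : Plane → ℝ} (c : ℝ)
    (h1 : IntegrableOn u Ω) (h2 : IntegrableOn (fun z => (u z) ^ 2) Ω) :
    IntegrableOn (fun z => (u z - c) ^ 2) Ω := by
  have : (fun z => (u z - c) ^ 2) = fun z => (u z) ^ 2 - (2 * c) * u z + c ^ 2 := by
    funext z; ring
  rw [this]
  exact (h2.sub (h1.const_mul (2 * c))).add
    (integrableOn_const (C := c ^ 2) hfin)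

/-- Membership in the Sobolev class is stable under subtracting a constant. -/
lemma sobolev_sub_const {Ω : Set Plane} (hfin : volume Ω ≠ ⊤) {u : Plane → ℝ} (c : ℝ)
    (hu : u ∈ sobolevClass Ω) (h1 : IntegrableOn u Ω) :
    (fun z => u z - c) ∈ sobolevClass Ω := by
  obtain ⟨hd, h2, hg⟩ := hu
  refine ⟨hd.sub_const c, sq_sub_const_integrableOn hfin c h1 h2, ?_⟩
  have : (fun z => ‖gradient (fun y => u y - c) z‖ ^ 2) = fun z => ‖gradient u z‖ ^ 2 := by
    funext z; rw [grad_sub_const]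
  rw [this]; exact hg

lemma dirichlet_sub_const (A : Plane → (Plane →ₗ[ℝ] Plane)) (Ω : Set Plane) (u : Plane → ℝ)
    (c : ℝ) : dirichletSeminorm A Ω (fun z => u z - c) = dirichletSeminorm A Ω u := by
  unfold dirichletSeminorm
  simp only [grad_sub_const]

/-- Mean-zero shift has zero integral. -/
lemma integral_sub_mean {Ω : Set Plane} (h0 : volume Ω ≠ 0) (hfin : volume Ω ≠ ⊤)
    {u : Plane → ℝ} (h1 : IntegrableOn u Ω) :
    (∫ z in Ω, (u z - (∫ z in Ω, u z) / (volume Ω).toReal)) = 0 := by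
  have hvol : (volume Ω).toReal ≠ 0 :=
    ENNReal.toReal_ne_zero.2 ⟨h0, hfin⟩
  rw [integral_sub h1 (integrableOn_const hfin)]
  rw [setIntegral_const]
  rw [measureReal_def, smul_eq_mul]
  field_simp
  ring

/-- The Rayleigh set of a nonempty bounded open set is nonempty. -/
lemma rayleigh_nonempty (A : Plane → (Plane →ₗ[ℝ] Plane)) (Ω : Set Plane)
    (hop : IsOpen Ω) (hne : Ω.Nonempty) (hbdd : Bornology.IsBounded Ω) :
    (rayleighSet A Ω).Nonempty := by
  have hmeas : MeasurableSet Ω := hop.measurableSet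
  have h0 : volume Ω ≠ 0 := (hop.measure_pos volume hne).ne'
  have hfin : volume Ω ≠ ⊤ := by
    refine ne_top_of_le_ne_top ?_ (measure_mono subset_closure)
    exact hbdd.isCompact_closure.measure_lt_top.ne
  have hvolR : (volume Ω).toReal ≠ 0 := ENNReal.toReal_ne_zero.2 ⟨h0, hfin⟩
  -- the coordinate function
  set f : Plane → ℝ := fun z => z 0 with hfdef
  have hfc : (fun y : Plane => y 0) = ⇑(EuclideanSpace.proj (𝕜 := ℝ) (0 : Fin 2)) := rfl
  have hfd : Differentiable ℝ f := by
    rw [hfdef, hfc]; exact (EuclideanSpace.proj (𝕜 := ℝ) (0 : Fin 2)).differentiable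
  have hfcont : Continuous f := by
    rw [hfdef, hfc]; exact (EuclideanSpace.proj (𝕜 := ℝ) (0 : Fin 2)).continuous
  have hint : ∀ g : Plane → ℝ, Continuous g → IntegrableOn g Ω := fun g hg =>
    (hg.continuousOn.integrableOn_compact hbdd.isCompact_closure).mono_set subset_closure
  set c0 : ℝ := (∫ z in Ω, f z) / (volume Ω).toReal with hc0
  set u : Plane → ℝ := fun z => f z - c0 with hu
  have hgradu : ∀ z, gradient u z =
      (InnerProductSpace.toDual ℝ Plane).symm (EuclideanSpace.proj (𝕜 := ℝ) (0 : Fin 2)) := by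
    intro z
    rw [hu, hfdef, grad_sub_const]
    simp only [gradient, hfc, ContinuousLinearMap.fderiv]
  have husob : u ∈ sobolevClass Ω := by
    refine ⟨((hfd.sub_const c0).differentiableOn), ?_, ?_⟩
    · exact hint _ ((show Continuous u from hfcont.sub continuous_const).pow 2)
    · have : (fun z => ‖gradient u z‖ ^ 2) = fun _ =>
          ‖(InnerProductSpace.toDual ℝ Plane).symm (EuclideanSpace.proj (𝕜 := ℝ) (0 : Fin 2))‖ ^ 2 := by
        funext z; rw [hgradu]
      rw [this]
      exact integrableOn_const hfin
  have hmean : (∫ z in Ω, u z) = 0 := integral_sub_mean h0 hfin (hint f hfcont)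
  have hl2 : l2NormOn Ω u ≠ 0 := by
    have hpos : 0 < ∫ z in Ω, (u z) ^ 2 := by
      rcases lt_or_eq_of_le (integral_nonneg (f := fun z => (u z) ^ 2) (fun z => sq_nonneg (u z))) with h | h
      · exact h
      exfalso
      have hae : (fun z => (u z) ^ 2) =ᶠ[ae (volume.restrict Ω)] 0 :=
        (integral_eq_zero_iff_of_nonneg (fun z => sq_nonneg (u z)) husob.2.1).1 h.symm
      have hae2 : ∀ᵐ z ∂(volume.restrict Ω), z 0 = c0 := by
        filter_upwards [hae] with z hz
        have : u z = 0 := by simpa using hz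
        rw [hu, hfdef] at this
        simpa [sub_eq_zero] using this
      have hnull : volume.restrict Ω {z : Plane | z 0 = c0}ᶜ = 0 := by
        rw [ae_iff] at hae2
        simpa [Set.compl_setOf] using hae2
      have hmeasH : MeasurableSet {z : Plane | z 0 = c0} := by
        have : Continuous (fun z : Plane => z 0) := by rw [hfc]; exact
          (EuclideanSpace.proj (𝕜 := ℝ) (0 : Fin 2)).continuous
        exact (isClosed_eq this continuous_const).measurableSet
      rw [Measure.restrict_apply hmeasH.compl] at hnull
      have : volume Ω ≤ volume {z : Plane | z 0 = c0} + volume ({z : Plane | z 0 = c0}ᶜ ∩ Ω) := by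
        refine le_trans (measure_mono ?_) (measure_union_le _ _)
        intro z hz
        by_cases hzc : z 0 = c0
        · exact Or.inl hzc
        · exact Or.inr ⟨hzc, hz⟩
      rw [hnull, hyperplane_null, add_zero] at this
      exact h0 (le_antisymm (le_of_le_of_eq this rfl) zero_le)
    unfold l2NormOn
    exact ne_of_gt (Real.sqrt_pos.2 hpos)
  exact ⟨_, u, husob, hmean, hl2, rfl⟩

/-- Theorem C: If `Ω ⊂ Ω̃` and there is a bounded linear extension operator
`E_Ω : L^{1,2}_A(Ω) → L^{1,2}_A(Ω̃)` of norm `‖E_Ω‖`, then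
`μ₁(A,Ω) ≥ μ₁(A,Ω̃)/‖E_Ω‖²`. -/
theorem stmt7 (Ω Ω' : Set Plane) (hsub : Ω ⊆ Ω')
    (hΩopen : IsOpen Ω) (hΩconn : IsConnected Ω) (hΩbdd : Bornology.IsBounded Ω)
    (hΩ'open : IsOpen Ω') (hΩ'conn : IsConnected Ω') (hΩ'bdd : Bornology.IsBounded Ω')
    (K : ℝ) (hK : 1 ≤ K) (A : Plane → (Plane →ₗ[ℝ] Plane))
    (hell : ∀ᵐ z ∂(volume.restrict Ω'), ∀ ξ : Plane,
      (1 / K) * ‖ξ‖ ^ 2 ≤ inner ℝ (A z ξ) ξ ∧ (inner ℝ (A z ξ) ξ : ℝ) ≤ K * ‖ξ‖ ^ 2)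
    (Ext : (Plane → ℝ) → (Plane → ℝ)) (hlin : IsLinearMap ℝ Ext)
    (hrestrict : ∀ u ∈ sobolevClass Ω, ∀ z ∈ Ω, Ext u z = u z)
    (N : ℝ) (hN : 0 < N)
    (hbdd : ∀ u ∈ sobolevClass Ω, Ext u ∈ sobolevClass Ω' ∧
      dirichletSeminorm A Ω' (Ext u) ≤ N * dirichletSeminorm A Ω u) :
    neumannEig A Ω ≥ neumannEig A Ω' / N ^ 2 := by
  have hmeasΩ : MeasurableSet Ω := hΩopen.measurableSet
  have hmeasΩ' : MeasurableSet Ω' := hΩ'open.measurableSet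
  have hfin : volume Ω ≠ ⊤ := by
    refine ne_top_of_le_ne_top hΩbdd.isCompact_closure.measure_lt_top.ne
      (measure_mono subset_closure)
  have hfin' : volume Ω' ≠ ⊤ := by
    refine ne_top_of_le_ne_top hΩ'bdd.isCompact_closure.measure_lt_top.ne
      (measure_mono subset_closure)
  have h0' : volume Ω' ≠ 0 := (hΩ'open.measure_pos volume hΩ'conn.nonempty).ne'
  have hSne := rayleigh_nonempty A Ω hΩopen hΩconn.nonempty hΩbdd
  have hBdd' : BddBelow (rayleighSet A Ω') := by
    refine ⟨0, fun r hr => ?_⟩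
    obtain ⟨u, _, _, _, rfl⟩ := hr
    positivity
  rw [ge_iff_le, neumannEig, neumannEig]
  apply le_csInf hSne
  rintro r ⟨u, hu, hmean, hl2, rfl⟩
  obtain ⟨hw, hD⟩ := hbdd u hu
  set w := Ext u with hwdef
  have hwmeas : AEStronglyMeasurable w (volume.restrict Ω') :=
    hw.1.continuousOn.aestronglyMeasurable hmeasΩ'
  have hwint : IntegrableOn w Ω' := integrableOn_of_sq hfin' hwmeas hw.2.1
  set c : ℝ := (∫ z in Ω', w z) / (volume Ω').toReal with hc
  set v : Plane → ℝ := fun z => w z - c with hv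
  have hvsob : v ∈ sobolevClass Ω' := sobolev_sub_const hfin' c hw hwint
  have hvmean : (∫ z in Ω', v z) = 0 := integral_sub_mean h0' hfin' hwint
  have humeas : AEStronglyMeasurable u (volume.restrict Ω) :=
    hu.1.continuousOn.aestronglyMeasurable hmeasΩ
  have huint : IntegrableOn u Ω := integrableOn_of_sq hfin humeas hu.2.1
  -- L² comparison
  have key1 : ∫ z in Ω, (u z) ^ 2 ≤ ∫ z in Ω, (u z - c) ^ 2 := by
    have hexp : (fun z => (u z - c) ^ 2) = fun z => (u z) ^ 2 - (2 * c) * u z + c ^ 2 := by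
      funext z; ring
    have hconst : IntegrableOn (fun _ : Plane => c ^ 2) Ω :=
      integrableOn_const hfin
    have h2c : IntegrableOn (fun z => (2 * c) * u z) Ω := huint.const_mul _
    have hsubint : IntegrableOn (fun z => (u z) ^ 2 - (2 * c) * u z) Ω := hu.2.1.sub h2c
    rw [hexp, integral_add hsubint hconst, integral_sub hu.2.1 h2c, integral_const_mul,
      hmean, setIntegral_const]
    have : 0 ≤ volume.real Ω • c ^ 2 := by positivity
    linarith
  have key2 : ∫ z in Ω, (u z - c) ^ 2 = ∫ z in Ω, (v z) ^ 2 := by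
    apply setIntegral_congr_fun hmeasΩ
    intro z hz
    show (u z - c) ^ 2 = (Ext u z - c) ^ 2
    rw [hrestrict u hu z hz]
  have key3 : ∫ z in Ω, (v z) ^ 2 ≤ ∫ z in Ω', (v z) ^ 2 :=
    setIntegral_mono_set hvsob.2.1 (Filter.Eventually.of_forall (fun z => sq_nonneg _))
      hsub.eventuallyLE
  have hl2le : l2NormOn Ω u ≤ l2NormOn Ω' v :=
    Real.sqrt_le_sqrt (by linarith)
  have hl2upos : 0 < l2NormOn Ω u :=
    lt_of_le_of_ne (Real.sqrt_nonneg _) (Ne.symm hl2)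
  have hvl2 : l2NormOn Ω' v ≠ 0 := ne_of_gt (lt_of_lt_of_le hl2upos hl2le)
  have hDv : dirichletSeminorm A Ω' v = dirichletSeminorm A Ω' w :=
    dirichlet_sub_const A Ω' w c
  have hmem : (dirichletSeminorm A Ω' v) ^ 2 / (l2NormOn Ω' v) ^ 2 ∈ rayleighSet A Ω' :=
    ⟨v, hvsob, hvmean, hvl2, rfl⟩
  have hchain : (dirichletSeminorm A Ω' v) ^ 2 / (l2NormOn Ω' v) ^ 2 ≤
      N ^ 2 * ((dirichletSeminorm A Ω u) ^ 2 / (l2NormOn Ω u) ^ 2) := by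
    have h1 : (dirichletSeminorm A Ω' v) ^ 2 / (l2NormOn Ω' v) ^ 2 ≤
        (dirichletSeminorm A Ω' v) ^ 2 / (l2NormOn Ω u) ^ 2 :=
      div_le_div_of_nonneg_left (sq_nonneg _) (pow_pos hl2upos 2)
        (pow_le_pow_left₀ hl2upos.le hl2le 2)
    have h2 : (dirichletSeminorm A Ω' v) ^ 2 ≤ N ^ 2 * (dirichletSeminorm A Ω u) ^ 2 := by
      rw [hDv]
      calc (dirichletSeminorm A Ω' w) ^ 2 ≤ (N * dirichletSeminorm A Ω u) ^ 2 :=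
            pow_le_pow_left₀ (Real.sqrt_nonneg _) hD 2
        _ = N ^ 2 * (dirichletSeminorm A Ω u) ^ 2 := by ring
    calc (dirichletSeminorm A Ω' v) ^ 2 / (l2NormOn Ω' v) ^ 2
        ≤ (dirichletSeminorm A Ω' v) ^ 2 / (l2NormOn Ω u) ^ 2 := h1
      _ ≤ (N ^ 2 * (dirichletSeminorm A Ω u) ^ 2) / (l2NormOn Ω u) ^ 2 := by
          gcongr
      _ = N ^ 2 * ((dirichletSeminorm A Ω u) ^ 2 / (l2NormOn Ω u) ^ 2) := by ring
  have hsInf : sInf (rayleighSet A Ω') ≤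
      N ^ 2 * ((dirichletSeminorm A Ω u) ^ 2 / (l2NormOn Ω u) ^ 2) :=
    le_trans (csInf_le hBdd' hmem) hchain
  rw [div_le_iff₀ (pow_pos hN 2)]
  linarith
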